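/- Let n ≥ 1, let c_1,…,c_n be pairwise distinct nonzero reals, and let σ_k denote the k-th elementary symmetric polynomial in c_1,…,c_n (with σ_0 = 1). Let V be the (n+1)×(n+1) matrix whose entry in row i (i = 0,…,n) and column j (j = 1,…,n) is c_j^i and whose last column is (1,0,…,0)ᵀ. If x = (x_1,…,x_n, x̄) ∈ ℝ^{n+1} and a = (a_0, a_1, …, a_n) ∈ ℝ^{n+1} satisfy V x = a, then x̄ = (1/σ_n) Σ_{l=0}^n (−1)^l a_l σ_{n−l}. -/

import Mathlib

/-- The `(n+1) × (n+1)` Vandermonde matrix in nodes `c_1, …, c_n` (rows indexed by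
powers `0, …, n`), augmented by a final column `(1, 0, …, 0)ᵀ`. -/
def Vmat (n : ℕ) (c : Fin n → ℝ) : Matrix (Fin (n + 1)) (Fin (n + 1)) ℝ :=
  Matrix.of fun i j =>
    if h : (j : ℕ) < n then (c ⟨j, h⟩) ^ (i : ℕ) else if (i : ℕ) = 0 then 1 else 0

/-- The `k`-th elementary symmetric polynomial `σ_k` in `c_1, …, c_n` (with `σ_0 = 1`). -/
noncomputable def esymmR (n : ℕ) (c : Fin n → ℝ) (k : ℕ) : ℝ :=
  ∑ s ∈ (Finset.univ : Finset (Fin n)).powersetCard k, ∏ i ∈ s, c i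

lemma esymmR_eq (n : ℕ) (c : Fin n → ℝ) (k : ℕ) :
    esymmR n c k = (Finset.univ.val.map c).esymm k := (Finset.esymm_map_val c _ k).symm

lemma esymmR_top (n : ℕ) (c : Fin n → ℝ) : esymmR n c n = ∏ i, c i := by
  unfold esymmR
  have hcard : (Finset.univ : Finset (Fin n)).card = n := by simp
  have hp := Finset.powersetCard_self (Finset.univ : Finset (Fin n))
  rw [hcard] at hp
  rw [hp, Finset.sum_singleton]

lemma key (n : ℕ) (c : Fin n → ℝ) (t : ℝ) :
    ∑ l : Fin (n+1), (-1:ℝ)^(l:ℕ) * esymmR n c (n - (l:ℕ)) * t^(l:ℕ)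
      = ∏ i, (c i - t) := by
  have hcard : Multiset.card (Finset.univ.val.map c) = n := by simp
  have hv := congrArg (Polynomial.eval t)
    (Multiset.prod_X_sub_X_eq_sum_esymm (Finset.univ.val.map c))
  simp only [Polynomial.eval_multiset_prod, Multiset.map_map, Function.comp,
    Polynomial.eval_sub, Polynomial.eval_X, Polynomial.eval_C, Polynomial.eval_finset_sum,
    Polynomial.eval_mul, Polynomial.eval_pow, Polynomial.eval_neg, Polynomial.eval_one,
    hcard] at hv
  have hprod : (Multiset.map (fun i => t - c i) Finset.univ.val).prod
      = ∏ i, (t - c i) := rfl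
  rw [Fin.sum_univ_eq_sum_range (fun l => (-1:ℝ)^l * esymmR n c (n - l) * t^l),
    ← Finset.sum_range_reflect]
  have hrhs : ∏ i, (c i - t) = (-1:ℝ)^n * ∏ i, (t - c i) := by
    have : ∀ i : Fin n, c i - t = (-1) * (t - c i) := fun i => by ring
    simp_rw [this]
    rw [Finset.prod_mul_distrib, Finset.prod_const, Finset.card_univ, Fintype.card_fin]
  rw [hrhs, ← hprod, hv, Finset.mul_sum]
  refine Finset.sum_congr rfl fun j hj => ?_
  have hj' : j ≤ n := Nat.lt_succ_iff.mp (Finset.mem_range.mp hj)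
  have h1 : n + 1 - 1 - j = n - j := by omega
  have h2 : n - (n - j) = j := Nat.sub_sub_self hj'
  have hpow : (-1:ℝ)^(n-j) = (-1:ℝ)^n * (-1:ℝ)^j := by
    have : (-1:ℝ)^n = (-1:ℝ)^(n-j) * (-1:ℝ)^j := by
      rw [← pow_add, Nat.sub_add_cancel hj']
    rw [this, mul_assoc, ← pow_add, ← two_mul, pow_mul]
    norm_num
  rw [h1, h2, hpow, esymmR_eq]
  ring

/-- If the `c_j` are pairwise distinct and nonzero and `V x = a`, then the last
component of `x` equals `(1/σ_n) Σ_{l=0}^n (−1)^l a_l σ_{n−l}`. -/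
theorem stmt_5 (n : ℕ) (hn : 1 ≤ n) (c : Fin n → ℝ)
    (hdist : ∀ i j : Fin n, i ≠ j → c i ≠ c j) (hne : ∀ j, c j ≠ 0)
    (x a : Fin (n + 1) → ℝ)
    (h : (Vmat n c).mulVec x = a) :
    x (Fin.last n) =
      (1 / esymmR n c n) *
        ∑ l : Fin (n + 1), (-1 : ℝ) ^ (l : ℕ) * a l * esymmR n c (n - (l : ℕ)) := by
  have hσ : esymmR n c n ≠ 0 := by
    rw [esymmR_top]
    exact Finset.prod_ne_zero_iff.mpr fun i _ => hne i
  have hT : (∑ l : Fin (n + 1), (-1 : ℝ) ^ (l : ℕ) * a l * esymmR n c (n - (l : ℕ)))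
      = esymmR n c n * x (Fin.last n) := by
    have ha : ∀ l, a l = ∑ j : Fin (n+1), Vmat n c l j * x j := by
      intro l; rw [← h]; rfl
    simp_rw [ha]
    simp_rw [Finset.mul_sum, Finset.sum_mul]
    rw [Finset.sum_comm]
    rw [Fin.sum_univ_castSucc
      (f := fun j => ∑ l : Fin (n+1), (-1:ℝ)^(l:ℕ) * (Vmat n c l j * x j) * esymmR n c (n - (l:ℕ)))]
    have hz : ∀ j0 : Fin n,
        (∑ l : Fin (n+1), (-1:ℝ)^(l:ℕ) * (Vmat n c l j0.castSucc * x j0.castSucc)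
          * esymmR n c (n - (l:ℕ))) = 0 := by
      intro j0
      have hV : ∀ l : Fin (n+1), Vmat n c l j0.castSucc = (c j0) ^ (l:ℕ) := by
        intro l
        simp only [Vmat, Matrix.of_apply, Fin.coe_castSucc, j0.isLt, dif_pos]
      simp_rw [hV]
      have : (∑ l : Fin (n+1), (-1:ℝ)^(l:ℕ) * ((c j0)^(l:ℕ) * x j0.castSucc)
          * esymmR n c (n - (l:ℕ)))
          = (∑ l : Fin (n+1), (-1:ℝ)^(l:ℕ) * esymmR n c (n - (l:ℕ)) * (c j0)^(l:ℕ))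
            * x j0.castSucc := by
        rw [Finset.sum_mul]; exact Finset.sum_congr rfl fun l _ => by ring
      rw [this, key]
      have : (∏ i, (c i - c j0)) = 0 :=
        Finset.prod_eq_zero (Finset.mem_univ j0) (by ring)
      rw [this, zero_mul]
    rw [Finset.sum_congr rfl fun j0 _ => hz j0, Finset.sum_const, smul_zero, zero_add]
    have hVlast : ∀ l : Fin (n+1),
        Vmat n c l (Fin.last n) = if (l:ℕ) = 0 then 1 else 0 := by
      intro l
      simp only [Vmat, Matrix.of_apply, Fin.val_last]
      rw [dif_neg (lt_irrefl n)]
    simp_rw [hVlast]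
    rw [Finset.sum_eq_single (0 : Fin (n+1))]
    · simp [mul_comm]
    · intro l _ hl
      have : (l:ℕ) ≠ 0 := fun hc => hl (Fin.ext hc)
      simp [this]
    · simp
  rw [hT]
  field_simp
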